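/- Let F, K be number fields with Galois closures F̃, K̃ over ℚ. If K̃ and F̃ are linearly disjoint over ℚ (e.g., if disc(F) and disc(K) are coprime), then Gal(Q̄/F) surjects onto Gal(K̃/ℚ) under the restriction map; consequently σ_F(K) = σ_ℚ(K), and Gal(Q̄/F) contains an element bisecting Hom(K,Q̄) exactly when Gal(Q̄/ℚ) does. -/

import Mathlib

set_option maxHeartbeats 1000000
set_option synthInstance.maxHeartbeats 1000000

noncomputable section

/-- A fixed algebraic closure of `ℚ`. -/
abbrev Qbar : Type := AlgebraicClosure ℚ

instance Qbar.normal_rat : Normal ℚ Qbar := by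
  have h : (DivisionRing.toRatAlgebra : Algebra ℚ Qbar) = AlgebraicClosure.instAlgebra ℚ :=
    Subsingleton.elim _ _
  rw [h]
  exact @IsAlgClosure.normal ℚ _ _ _ (AlgebraicClosure.instAlgebra ℚ) inferInstance

instance Qbar.normalClosure_normal_rat (K : Type*) [Field K] [Algebra ℚ K] :
    Normal ℚ (IntermediateField.normalClosure ℚ K Qbar) := by
  have := normalClosure.normal ℚ K Qbar
  convert this using 1
  exact Subsingleton.elim _ _

/-- The orbit of an embedding `σ : K → Q̄` under the integer powers of a Galois
element `g ∈ Gal(Q̄/F)`, acting by postcomposition. -/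
def gOrbit {F : Type*} [Field F] [Algebra F Qbar]
    {K : Type*} [Field K] [Algebra ℚ K]
    (g : Qbar ≃ₐ[F] Qbar) (σ : K →ₐ[ℚ] Qbar) : Set (K →ₐ[ℚ] Qbar) :=
  {τ | ∃ n : ℤ, ∀ x : K, τ x = (g ^ n) (σ x)}

/-- `λ_F(K)`: the supremum over `g ∈ Gal(Q̄/F)` of the largest cardinality of a
`⟨g⟩`-orbit on `Hom(K, Q̄)`. -/
def lam (F : Type*) [Field F] [Algebra F Qbar]
    (K : Type*) [Field K] [Algebra ℚ K] : ℕ :=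
  sSup {m : ℕ | ∃ (g : Qbar ≃ₐ[F] Qbar) (σ : K →ₐ[ℚ] Qbar),
    m = Nat.card (gOrbit g σ)}

/-- The slope `σ_F(K) = 1 − λ_F(K)/[K:ℚ]`. -/
def slopeF (F : Type*) [Field F] [Algebra F Qbar]
    (K : Type*) [Field K] [Algebra ℚ K] : ℚ :=
  1 - (lam F K : ℚ) / (Module.finrank ℚ K : ℚ)

/-- `g` bisects `Hom(K, Q̄)`: it has exactly two orbits, of equal cardinality. -/
def Bisects {F : Type*} [Field F] [Algebra F Qbar]
    (K : Type*) [Field K] [Algebra ℚ K] (g : Qbar ≃ₐ[F] Qbar) : Prop :=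
  ∃ σ τ : K →ₐ[ℚ] Qbar, gOrbit g σ ≠ gOrbit g τ ∧
    (∀ υ : K →ₐ[ℚ] Qbar, gOrbit g υ = gOrbit g σ ∨ gOrbit g υ = gOrbit g τ) ∧
    Nat.card (gOrbit g σ) = Nat.card (gOrbit g τ)

/-- Restriction of scalars as a monoid hom from `Gal(Q̄/F)` to `Gal(Q̄/ℚ)`. -/
def rsHom (F : IntermediateField ℚ Qbar) :
    (Qbar ≃ₐ[↥F] Qbar) →* (Qbar ≃ₐ[ℚ] Qbar) where
  toFun := AlgEquiv.restrictScalars ℚ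
  map_one' := rfl
  map_mul' _ _ := rfl

lemma rs_zpow (F : IntermediateField ℚ Qbar) (g : Qbar ≃ₐ[↥F] Qbar) (n : ℤ)
    (x : Qbar) : ((AlgEquiv.restrictScalars ℚ g) ^ n) x = (g ^ n) x := by
  have : (AlgEquiv.restrictScalars ℚ g) ^ n = rsHom F (g ^ n) := by
    rw [map_zpow]; rfl
  rw [this]; rfl

/-- If two elements of `Gal(Q̄/ℚ)` restrict to the same element of `Gal(K̃/ℚ)`, all
their integer powers agree on `K̃`. -/
lemma zpow_agree (K : IntermediateField ℚ Qbar) [FiniteDimensional ℚ K]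
    (a b : Qbar ≃ₐ[ℚ] Qbar)
    (h : AlgEquiv.restrictNormalHom (F := ℚ) (K₁ := Qbar) (IntermediateField.normalClosure ℚ K Qbar) a =
         AlgEquiv.restrictNormalHom (F := ℚ) (K₁ := Qbar) (IntermediateField.normalClosure ℚ K Qbar) b)
    (n : ℤ) (x : Qbar) (hx : x ∈ IntermediateField.normalClosure ℚ K Qbar) : (a ^ n) x = (b ^ n) x := by
  set N := IntermediateField.normalClosure ℚ K Qbar
  have h' : AlgEquiv.restrictNormalHom (F := ℚ) (K₁ := Qbar) N (a ^ n) =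
      AlgEquiv.restrictNormalHom (F := ℚ) (K₁ := Qbar) N (b ^ n) := by
    rw [map_zpow, map_zpow, h]
  have ha := AlgEquiv.restrictNormal_commutes (a ^ n) N ⟨x, hx⟩
  have hb := AlgEquiv.restrictNormal_commutes (b ^ n) N ⟨x, hx⟩
  have hNa : ((a ^ n).restrictNormal N) = AlgEquiv.restrictNormalHom (F := ℚ) (K₁ := Qbar) N (a ^ n) := rfl
  have hNb : ((b ^ n).restrictNormal N) = AlgEquiv.restrictNormalHom (F := ℚ) (K₁ := Qbar) N (b ^ n) := rfl
  rw [hNa, h', ← hNb] at ha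
  have : (algebraMap (↥N) Qbar) (⟨x, hx⟩ : ↥N) = x := rfl
  rw [this] at ha hb
  rw [← ha, ← hb]

lemma orbit_eq (F K : IntermediateField ℚ Qbar) [FiniteDimensional ℚ K]
    (g' : Qbar ≃ₐ[↥F] Qbar) (g : Qbar ≃ₐ[ℚ] Qbar)
    (h : AlgEquiv.restrictNormalHom (F := ℚ) (K₁ := Qbar) (IntermediateField.normalClosure ℚ K Qbar)
        (AlgEquiv.restrictScalars ℚ g') =
      AlgEquiv.restrictNormalHom (F := ℚ) (K₁ := Qbar) (IntermediateField.normalClosure ℚ K Qbar) g)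
    (σ : ↥K →ₐ[ℚ] Qbar) : gOrbit g' σ = gOrbit g σ := by
  ext τ
  constructor <;> rintro ⟨n, hn⟩ <;> refine ⟨n, fun x => ?_⟩ <;> rw [hn x]
  · rw [← rs_zpow F g' n (σ x)]
    exact zpow_agree K _ g h n (σ x) (σ.fieldRange_le_normalClosure ⟨x, rfl⟩)
  · rw [← rs_zpow F g' n (σ x)]
    exact (zpow_agree K _ g h n (σ x) (σ.fieldRange_le_normalClosure ⟨x, rfl⟩)).symm

theorem linearly_disjoint_slope (F K : IntermediateField ℚ Qbar)
    [FiniteDimensional ℚ F] [FiniteDimensional ℚ K]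
    (hdisj : Function.Surjective fun g : Qbar ≃ₐ[ℚ] Qbar =>
      (AlgEquiv.restrictNormalHom (F := ℚ) (K₁ := Qbar) (IntermediateField.normalClosure ℚ F Qbar) g,
       AlgEquiv.restrictNormalHom (F := ℚ) (K₁ := Qbar) (IntermediateField.normalClosure ℚ K Qbar) g)) :
    Function.Surjective (fun g : Qbar ≃ₐ[↥F] Qbar =>
      AlgEquiv.restrictNormalHom (F := ℚ) (K₁ := Qbar) (IntermediateField.normalClosure ℚ K Qbar)
        (AlgEquiv.restrictScalars ℚ g)) ∧
    slopeF ↥F ↥K = slopeF ℚ ↥K ∧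
    ((∃ g : Qbar ≃ₐ[↥F] Qbar, Bisects ↥K g) ↔
      (∃ g : Qbar ≃ₐ[ℚ] Qbar, Bisects ↥K g)) := by
  -- Part 1: surjectivity
  have surj : Function.Surjective (fun g : Qbar ≃ₐ[↥F] Qbar =>
      AlgEquiv.restrictNormalHom (F := ℚ) (K₁ := Qbar) (IntermediateField.normalClosure ℚ K Qbar)
        (AlgEquiv.restrictScalars ℚ g)) := by
    intro h
    obtain ⟨g, hg⟩ := hdisj (⟨1, h⟩ : (↥(IntermediateField.normalClosure ℚ (↥F) Qbar) ≃ₐ[ℚ] ↥(IntermediateField.normalClosure ℚ (↥F) Qbar)) × (↥(IntermediateField.normalClosure ℚ (↥K) Qbar) ≃ₐ[ℚ] ↥(IntermediateField.normalClosure ℚ (↥K) Qbar)))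
    have hF : AlgEquiv.restrictNormalHom (F := ℚ) (K₁ := Qbar)
        (IntermediateField.normalClosure ℚ F Qbar) g = 1 := congrArg Prod.fst hg
    have hK : AlgEquiv.restrictNormalHom (F := ℚ) (K₁ := Qbar)
        (IntermediateField.normalClosure ℚ K Qbar) g = h := congrArg Prod.snd hg
    -- g fixes F pointwise
    have hfix : ∀ x : ↥F, g (algebraMap ↥F Qbar x) = algebraMap ↥F Qbar x := by
      intro x
      have hx : (x : Qbar) ∈ IntermediateField.normalClosure ℚ F Qbar :=
        IntermediateField.le_normalClosure F x.2
      have hc := AlgEquiv.restrictNormal_commutes g (IntermediateField.normalClosure ℚ F Qbar) ⟨x, hx⟩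
      have hN : (g.restrictNormal (IntermediateField.normalClosure ℚ F Qbar)) =
          AlgEquiv.restrictNormalHom (F := ℚ) (K₁ := Qbar) (IntermediateField.normalClosure ℚ F Qbar) g := rfl
      rw [hN, hF] at hc
      exact hc.symm
    refine ⟨AlgEquiv.ofRingEquiv (f := g.toRingEquiv) hfix, ?_⟩
    have : AlgEquiv.restrictScalars ℚ (AlgEquiv.ofRingEquiv (f := g.toRingEquiv) hfix) = g :=
      AlgEquiv.ext fun _ => rfl
    simpa [this] using hK
  refine ⟨surj, ?_, ?_⟩
  · -- slopes
    have hlam : lam ↥F ↥K = lam ℚ ↥K := by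
      unfold lam
      congr 1
      ext m
      constructor
      · rintro ⟨g', σ, rfl⟩
        exact ⟨AlgEquiv.restrictScalars ℚ g', σ,
          by rw [orbit_eq F K g' (AlgEquiv.restrictScalars ℚ g') rfl σ]⟩
      · rintro ⟨g, σ, rfl⟩
        obtain ⟨g', hg'⟩ := surj (AlgEquiv.restrictNormalHom (F := ℚ) (K₁ := Qbar)
          (IntermediateField.normalClosure ℚ K Qbar) g)
        exact ⟨g', σ, by rw [orbit_eq F K g' g hg' σ]⟩
    rw [slopeF, slopeF, hlam]
  · constructor
    · rintro ⟨g', σ, τ, h1, h2, h3⟩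
      have horb := orbit_eq F K g' (AlgEquiv.restrictScalars ℚ g') rfl
      refine ⟨AlgEquiv.restrictScalars ℚ g', σ, τ, ?_, fun υ => ?_, ?_⟩
      · rw [← horb, ← horb]; exact h1
      · rw [← horb, ← horb, ← horb]; exact h2 υ
      · rw [← horb, ← horb]; exact h3
    · rintro ⟨g, σ, τ, h1, h2, h3⟩
      obtain ⟨g', hg'⟩ := surj (AlgEquiv.restrictNormalHom (F := ℚ) (K₁ := Qbar)
        (IntermediateField.normalClosure ℚ K Qbar) g)
      have horb := orbit_eq F K g' g hg'
      refine ⟨g', σ, τ, ?_, fun υ => ?_, ?_⟩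
      · rw [horb, horb]; exact h1
      · rw [horb, horb, horb]; exact h2 υ
      · rw [horb, horb]; exact h3
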